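/- arXiv:1810.00065 — 7 statements merged into one kernel-verified Lean document; each statement's English description precedes it below -/
import Mathlib

section
/- If G is a cycle whose length is divisible by three, then the sum of (-1)^{|A|} over all stable (independent) sets A of G equals ±2 (i.e., has absolute value 2). -/
open Finset
open scoped Classical

variable {V : Type*} [Fintype V]

/-- `fG G X Y` is the sum of `(-1)^|A|` over stable sets `A` of `G`
with `X ⊆ A` and `A ∩ Y = ∅`. -/
noncomputable def fG (G : SimpleGraph V) (X Y : Finset V) : ℤ :=
  ∑ A ∈ Finset.univ.filter (fun A : Finset V =>
      (∀ u ∈ A, ∀ v ∈ A, ¬ G.Adj u v) ∧ X ⊆ A ∧ Disjoint A Y),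
    (-1 : ℤ) ^ A.card
lemma fG_univ_forbidden (G : SimpleGraph V) : fG G ∅ Finset.univ = 1 := by
  unfold fG
  have : Finset.univ.filter (fun A : Finset V =>
      (∀ u ∈ A, ∀ v ∈ A, ¬ G.Adj u v) ∧ ∅ ⊆ A ∧ Disjoint A Finset.univ) = {∅} := by
    ext A
    simp only [mem_filter, mem_univ, true_and, Finset.empty_subset, true_and,
      Finset.mem_singleton]
    constructor
    · intro h
      exact Finset.eq_empty_of_forall_notMem fun x hx =>
        (Finset.disjoint_left.mp h.2 hx (Finset.mem_univ x))
    · rintro rfl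
      simp
  rw [this]
  simp

lemma psi_ignore : True := trivial




lemma fG_congr {W : Type*} [Fintype W] (G : SimpleGraph V) (H : SimpleGraph W)
    (e : G ≃g H) : fG G ∅ ∅ = fG H ∅ ∅ := by
  unfold fG
  apply Finset.sum_nbij' (fun A => A.image e) (fun B => B.image e.symm)
  · intro A hA
    simp only [mem_filter, mem_univ, true_and, Finset.empty_subset,
      Finset.disjoint_empty_right, and_true] at hA ⊢
    intro u hu w hw
    simp only [Finset.mem_image] at hu hw
    obtain ⟨u', hu', rfl⟩ := hu
    obtain ⟨w', hw', rfl⟩ := hw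
    rw [e.map_adj_iff]
    exact hA u' hu' w' hw'
  · intro B hB
    simp only [mem_filter, mem_univ, true_and, Finset.empty_subset,
      Finset.disjoint_empty_right, and_true] at hB ⊢
    intro u hu w hw
    simp only [Finset.mem_image] at hu hw
    obtain ⟨u', hu', rfl⟩ := hu
    obtain ⟨w', hw', rfl⟩ := hw
    rw [e.symm.map_adj_iff]
    exact hB u' hu' w' hw'
  · intro A _
    ext x
    simp [Finset.mem_image]
  · intro B _
    ext x
    simp [Finset.mem_image]
  · intro A _
    rw [Finset.card_image_of_injective _ e.injective]





lemma fG_split (G : SimpleGraph V) (Y : Finset V) (v : V) (hv : v ∉ Y) :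
    fG G ∅ Y = fG G ∅ (insert v Y) - fG G ∅ (Y ∪ insert v (G.neighborFinset v)) := by
  unfold fG
  rw [← Finset.sum_filter_add_sum_filter_not
    (Finset.univ.filter (fun A : Finset V =>
      (∀ u ∈ A, ∀ w ∈ A, ¬ G.Adj u w) ∧ ∅ ⊆ A ∧ Disjoint A Y)) (fun A => v ∈ A)]
  have h1 : ∑ A ∈ (Finset.univ.filter (fun A : Finset V =>
      (∀ u ∈ A, ∀ w ∈ A, ¬ G.Adj u w) ∧ ∅ ⊆ A ∧ Disjoint A Y)).filter (fun A => v ∉ A),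
        (-1 : ℤ) ^ A.card
      = ∑ A ∈ Finset.univ.filter (fun A : Finset V =>
      (∀ u ∈ A, ∀ w ∈ A, ¬ G.Adj u w) ∧ ∅ ⊆ A ∧ Disjoint A (insert v Y)),
        (-1 : ℤ) ^ A.card := by
    apply Finset.sum_congr _ (fun _ _ => rfl)
    rw [Finset.filter_filter]
    ext A
    simp only [mem_filter, mem_univ, true_and, Finset.empty_subset, true_and,
      Finset.disjoint_insert_right]
    tauto
  have h2 : ∑ A ∈ (Finset.univ.filter (fun A : Finset V =>
      (∀ u ∈ A, ∀ w ∈ A, ¬ G.Adj u w) ∧ ∅ ⊆ A ∧ Disjoint A Y)).filter (fun A => v ∈ A),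
        (-1 : ℤ) ^ A.card
      = - ∑ A ∈ Finset.univ.filter (fun A : Finset V =>
      (∀ u ∈ A, ∀ w ∈ A, ¬ G.Adj u w) ∧ ∅ ⊆ A ∧ Disjoint A (Y ∪ insert v (G.neighborFinset v))),
        (-1 : ℤ) ^ A.card := by
    rw [← Finset.sum_neg_distrib]
    apply Finset.sum_nbij' (fun A => A.erase v) (fun B => insert v B)
    · intro A hA
      simp only [mem_filter, mem_univ, true_and, Finset.empty_subset, true_and] at hA ⊢
      obtain ⟨⟨hstab, hdisj⟩, hvA⟩ := hA
      refine ⟨fun u hu w hw => hstab u (Finset.mem_of_mem_erase hu) w (Finset.mem_of_mem_erase hw), ?_⟩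
      rw [Finset.disjoint_union_right, Finset.disjoint_insert_right]
      refine ⟨Finset.disjoint_of_subset_left (Finset.erase_subset _ _) hdisj,
        Finset.notMem_erase _ _, ?_⟩
      rw [Finset.disjoint_left]
      intro w hw hwN
      rw [SimpleGraph.mem_neighborFinset] at hwN
      exact hstab v hvA w (Finset.mem_of_mem_erase hw) hwN
    · intro B hB
      simp only [mem_filter, mem_univ, true_and, Finset.empty_subset, true_and] at hB ⊢
      obtain ⟨hstab, hdisj⟩ := hB
      rw [Finset.disjoint_union_right, Finset.disjoint_insert_right] at hdisj
      obtain ⟨hdY, hvB, hdN⟩ := hdisj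
      constructor
      · constructor
        · intro u hu w hw
          rw [Finset.mem_insert] at hu hw
          rcases hu with rfl | hu <;> rcases hw with rfl | hw
          · exact G.irrefl
          · intro hadj
            exact Finset.disjoint_left.mp hdN hw (by rwa [SimpleGraph.mem_neighborFinset])
          · intro hadj
            exact Finset.disjoint_left.mp hdN hu
              (by rw [SimpleGraph.mem_neighborFinset]; exact hadj.symm)
          · exact hstab u hu w hw
        · rw [Finset.disjoint_insert_left]
          exact ⟨hv, hdY⟩
      · exact Finset.mem_insert_self v B
    · intro A hA
      simp only [mem_filter] at hA
      exact Finset.insert_erase hA.2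
    · intro B hB
      simp only [mem_filter, mem_univ, true_and] at hB
      have hvB : v ∉ B := by
        have := hB.2.2
        rw [Finset.disjoint_union_right, Finset.disjoint_insert_right] at this
        exact this.2.1
      exact Finset.erase_insert hvB
    · intro A hA
      simp only [mem_filter] at hA
      have hAc : A.card = (A.erase v).card + 1 := by
        rw [Finset.card_erase_of_mem hA.2]
        have : 1 ≤ A.card := Finset.card_pos.mpr ⟨v, hA.2⟩
        omega
      rw [hAc, pow_succ]
      ring
  rw [h1, h2]
  ring



def psi (j : ℕ) : ℤ :=
  if j % 6 = 0 then 1 else if j % 6 = 1 then 0 else if j % 6 = 2 then -1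
  else if j % 6 = 3 then -1 else if j % 6 = 4 then 0 else 1

lemma psi_rec (j : ℕ) : psi (j + 2) = psi (j + 1) - psi j := by
  have h : j % 6 = 0 ∨ j % 6 = 1 ∨ j % 6 = 2 ∨ j % 6 = 3 ∨ j % 6 = 4 ∨ j % 6 = 5 := by omega
  rcases h with h | h | h | h | h | h <;>
  · have h1 : (j + 1) % 6 = (j % 6 + 1) % 6 := by omega
    have h2 : (j + 2) % 6 = (j % 6 + 2) % 6 := by omega
    simp [psi, h, h1, h2]

open Fin.NatCast
open Fin.CommRing

noncomputable def arc (n : ℕ) [NeZero n] (a : Fin n) (k : ℕ) : Finset (Fin n) :=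
  (Finset.range k).image (fun i : ℕ => a + (i : Fin n))

lemma mem_arc {n : ℕ} [NeZero n] {a : Fin n} {k : ℕ} {x : Fin n} :
    x ∈ arc n a k ↔ ∃ i < k, a + (i : Fin n) = x := by
  rw [arc, Finset.mem_image]
  constructor
  · rintro ⟨i, hi, rfl⟩
    exact ⟨i, Finset.mem_range.mp hi, rfl⟩
  · rintro ⟨i, hi, rfl⟩
    exact ⟨i, Finset.mem_range.mpr hi, rfl⟩

lemma arc_succ {n : ℕ} [NeZero n] (a : Fin n) (k : ℕ) :
    arc n a (k + 1) = insert (a + (k : Fin n)) (arc n a k) := by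
  rw [arc, arc, Finset.range_add_one, Finset.image_insert]

lemma arc_full {n : ℕ} [NeZero n] (a : Fin n) (k : ℕ) (hk : n ≤ k) :
    arc n a k = Finset.univ := by
  ext x
  simp only [Finset.mem_univ, iff_true, mem_arc]
  exact ⟨(x - a).val, lt_of_lt_of_le (x - a).isLt hk, by simp [Fin.cast_val_eq_self]⟩

lemma not_mem_arc_self {n : ℕ} [NeZero n] (a : Fin n) (k : ℕ) (hk : k < n) :
    a + (k : Fin n) ∉ arc n a k := by
  rw [mem_arc]
  rintro ⟨i, hi, hik⟩
  have : (i : Fin n) = (k : Fin n) := by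
    have := add_left_cancel hik
    exact this
  have hiv : ((i : Fin n) : ℕ) = i := Fin.val_cast_of_lt (lt_trans hi hk)
  have hkv : ((k : Fin n) : ℕ) = k := Fin.val_cast_of_lt hk
  rw [this, hkv] at hiv
  omega

lemma arc_one {n : ℕ} [NeZero n] (a : Fin n) : arc n a 1 = {a} := by
  rw [arc_succ]
  have : arc n a 0 = ∅ := by rw [arc]; simp
  rw [this]
  simp

lemma cycle_rec (m : ℕ) (a : Fin (m + 3)) (k : ℕ) (hk : 1 ≤ k) (hkn : k < m + 3) :
    fG (SimpleGraph.cycleGraph (m + 3)) ∅ (arc (m + 3) a k)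
      = fG (SimpleGraph.cycleGraph (m + 3)) ∅ (arc (m + 3) a (k + 1))
        - fG (SimpleGraph.cycleGraph (m + 3)) ∅ (arc (m + 3) a (k + 2)) := by
  have hv := not_mem_arc_self a k hkn
  rw [fG_split _ _ (a + (k : Fin (m + 3))) hv]
  have hnbr : ∀ x : Fin (m + 3),
      (SimpleGraph.cycleGraph (m + 3)).Adj (a + (k : Fin (m + 3))) x
        ↔ (x = a + (k : Fin (m + 3)) - 1 ∨ x = a + (k : Fin (m + 3)) + 1) := by
    intro x
    have h := Set.ext_iff.mp (SimpleGraph.cycleGraph_neighborSet (n := m + 1)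
      (v := a + (k : Fin (m + 3)))) x
    simpa [SimpleGraph.mem_neighborSet] using h
  have hv1 : a + (k : Fin (m + 3)) - 1 ∈ arc (m + 3) a k := by
    rw [mem_arc]
    refine ⟨k - 1, by omega, ?_⟩
    rw [Nat.cast_sub hk, Nat.cast_one]
    ring
  have hv2 : a + (k : Fin (m + 3)) + 1 = a + ((k + 1 : ℕ) : Fin (m + 3)) := by
    rw [Nat.cast_add, Nat.cast_one]
    ring
  have h1 : arc (m + 3) a (k + 1) = insert (a + (k : Fin (m + 3))) (arc (m + 3) a k) :=
    arc_succ a k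
  have h2 : arc (m + 3) a (k + 2)
      = insert (a + ((k + 1 : ℕ) : Fin (m + 3))) (arc (m + 3) a (k + 1)) := arc_succ a (k + 1)
  congr 1
  · congr 1
    rw [h1]
    ext x
    simp [Finset.mem_insert]
  · congr 1
    rw [h2, h1]
    ext x
    simp only [Finset.mem_union, Finset.mem_insert, Finset.mem_singleton,
      SimpleGraph.mem_neighborFinset, hnbr x]
    constructor
    · rintro (hx | rfl | rfl | rfl)
      · exact Or.inr (Or.inr hx)
      · exact Or.inr (Or.inl rfl)
      · exact Or.inr (Or.inr hv1)
      · exact Or.inl hv2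
    · rintro (rfl | rfl | hx)
      · exact Or.inr (Or.inr (Or.inr hv2.symm))
      · exact Or.inr (Or.inl rfl)
      · exact Or.inl hx

lemma cycle_rec0 (m : ℕ) (a : Fin (m + 3)) :
    fG (SimpleGraph.cycleGraph (m + 3)) ∅ ∅
      = fG (SimpleGraph.cycleGraph (m + 3)) ∅ (arc (m + 3) a 1)
        - fG (SimpleGraph.cycleGraph (m + 3)) ∅ (arc (m + 3) (a - 1) 3) := by
  rw [fG_split _ ∅ a (Finset.notMem_empty a)]
  have hnbr : ∀ x : Fin (m + 3),
      (SimpleGraph.cycleGraph (m + 3)).Adj a x ↔ (x = a - 1 ∨ x = a + 1) := by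
    intro x
    have h := Set.ext_iff.mp (SimpleGraph.cycleGraph_neighborSet (n := m + 1) (v := a)) x
    simpa [SimpleGraph.mem_neighborSet] using h
  have h3 : arc (m + 3) (a - 1) 3
      = insert ((a - 1) + ((2 : ℕ) : Fin (m + 3))) (arc (m + 3) (a - 1) 2) := arc_succ (a - 1) 2
  have h2 : arc (m + 3) (a - 1) 2
      = insert ((a - 1) + ((1 : ℕ) : Fin (m + 3))) (arc (m + 3) (a - 1) 1) := arc_succ (a - 1) 1
  have c1 : (a - 1) + ((1 : ℕ) : Fin (m + 3)) = a := by rw [Nat.cast_one]; ring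
  have c2 : (a - 1) + ((2 : ℕ) : Fin (m + 3)) = a + 1 := by rw [Nat.cast_two]; ring
  refine congrArg₂ (fun x y : ℤ => x - y) (congrArg _ ?_) (congrArg _ ?_)
  · rw [arc_one]
    ext x
    simp
  · rw [h3, h2, arc_one, c1, c2]
    ext x
    simp only [Finset.mem_union, Finset.notMem_empty, Finset.mem_insert,
      Finset.mem_singleton, false_or, SimpleGraph.mem_neighborFinset, hnbr x]
    tauto

lemma arc_val (m : ℕ) : ∀ j k (a : Fin (m + 3)), 1 ≤ k → k + j = m + 3 →
    fG (SimpleGraph.cycleGraph (m + 3)) ∅ (arc (m + 3) a k) = psi j := by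
  intro j
  induction j using Nat.strong_induction_on with
  | _ j ih =>
    intro k a hk hkj
    match j with
    | 0 =>
      rw [arc_full a k (by omega), fG_univ_forbidden]
      norm_num [psi]
    | 1 =>
      rw [cycle_rec m a k (by omega) (by omega), arc_full a (k + 1) (by omega),
        arc_full a (k + 2) (by omega), fG_univ_forbidden]
      norm_num [psi]
    | (j' + 2) =>
      rw [cycle_rec m a k (by omega) (by omega),
        ih (j' + 1) (by omega) (k + 1) a (by omega) (by omega),
        ih j' (by omega) (k + 2) a (by omega) (by omega), psi_rec]

theorem cycle_length_div_three (G : SimpleGraph V) (n : ℕ) (hn : 3 ≤ n) (h3 : 3 ∣ n)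
    (iso : G ≃g SimpleGraph.cycleGraph n) :
    |fG G ∅ ∅| = 2 := by
  obtain ⟨m, rfl⟩ : ∃ m, n = m + 3 := ⟨n - 3, by omega⟩
  rw [fG_congr G _ iso, cycle_rec0 m 1,
    arc_val m (m + 2) 1 1 (by omega) (by omega),
    arc_val m m 3 (1 - 1) (by omega) (by omega)]
  have hm : m % 6 = 0 ∨ m % 6 = 3 := by omega
  rcases hm with hm | hm
  · have h2 : (m + 2) % 6 = 2 := by omega
    simp [psi, hm, h2]
  · have h2 : (m + 2) % 6 = 5 := by omega
    simp [psi, hm, h2]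
end

section
/- Let G be a graph, and let X, Y ⊆ V(G) be disjoint with f_G(X,Y) ≠ 0. If v ∈ V(G) ∖ (N[X] ∪ Y), then v has a neighbour in V(G) ∖ (N[X] ∪ Y). -/
open Finset
open scoped Classical

variable {V : Type*} [Fintype V]

theorem lonely (G : SimpleGraph V) (X Y : Finset V) (hXY : Disjoint X Y)
    (hne : fG G X Y ≠ 0) (v : V)
    (hv : v ∉ X ∧ (∀ u ∈ X, ¬ G.Adj u v) ∧ v ∉ Y) :
    ∃ w : V, G.Adj v w ∧ w ∉ X ∧ (∀ u ∈ X, ¬ G.Adj u w) ∧ w ∉ Y := by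
  by_contra hcon
  push_neg at hcon
  obtain ⟨hvX, hvNX, hvY⟩ := hv
  apply hne
  unfold fG
  -- the involution: toggle v
  refine Finset.sum_involution
    (fun A _ => if v ∈ A then A.erase v else insert v A) ?_ ?_ ?_ ?_
  · intro A hA
    by_cases h : v ∈ A
    · simp only [if_pos h]
      have : A.card = (A.erase v).card + 1 := by
        rw [Finset.card_erase_of_mem h]
        exact (Nat.succ_pred_eq_of_pos (Finset.card_pos.mpr ⟨v, h⟩)).symm
      rw [this, pow_succ]
      ring
    · simp only [if_neg h]
      rw [Finset.card_insert_of_notMem h, pow_succ]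
      ring
  · intro A hA _
    by_cases h : v ∈ A
    · simp only [if_pos h]
      intro heq
      have := Finset.notMem_erase v A
      rw [heq] at this
      exact this h
    · simp only [if_neg h]
      intro heq
      exact h (heq ▸ Finset.mem_insert_self v A)
  · intro A hA
    simp only [Finset.mem_filter, Finset.mem_univ, true_and] at hA ⊢
    obtain ⟨hstab, hXA, hdis⟩ := hA
    by_cases h : v ∈ A
    · simp only [if_pos h]
      refine ⟨fun u hu w hw => hstab u (Finset.mem_of_mem_erase hu) w
        (Finset.mem_of_mem_erase hw), ?_, ?_⟩
      · intro x hx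
        exact Finset.mem_erase.mpr ⟨fun hxv => hvX (hxv ▸ hx), hXA hx⟩
      · exact hdis.mono_left (Finset.erase_subset _ _)
    · -- key: no vertex of A is adjacent to v
      have key : ∀ w ∈ A, ¬ G.Adj v w := by
        intro w hw hadj
        by_cases hwX : w ∈ X
        · exact hvNX w hwX hadj.symm
        by_cases hwN : ∀ u ∈ X, ¬ G.Adj u w
        · exact Finset.disjoint_left.mp hdis hw (hcon w hadj hwX hwN)
        · push_neg at hwN
          obtain ⟨u, huX, huw⟩ := hwN
          exact hstab u (hXA huX) w hw huw
      simp only [if_neg h]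
      refine ⟨?_, hXA.trans (Finset.subset_insert _ _), ?_⟩
      · intro u hu w hw
        rcases Finset.mem_insert.mp hu with rfl | hu'
        · rcases Finset.mem_insert.mp hw with rfl | hw'
          · exact fun hadj => G.irrefl hadj
          · exact key w hw'
        · rcases Finset.mem_insert.mp hw with rfl | hw'
          · intro hadj; exact key u hu' hadj.symm
          · exact hstab u hu' w hw'
      · rw [Finset.disjoint_left]
        intro a ha haY
        rcases Finset.mem_insert.mp ha with rfl | ha'
        · exact hvY haY
        · exact Finset.disjoint_left.mp hdis ha' haY
  · intro A hA
    by_cases h : v ∈ A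
    · simp only [if_pos h, if_neg (Finset.notMem_erase v A), Finset.insert_erase h]
    · simp only [if_neg h, if_pos (Finset.mem_insert_self v A), Finset.erase_insert h]
end

section
/- Let g be a good counter on a graph G, let X, Y ⊆ V(G) be disjoint, and let u, v ∈ V(G) ∖ (X ∪ Y). If g(X,Y) = g(X∪{u,v}, Y) ≠ 0, then g(X,Y) = g(X∪{v}, Y). -/
open Finset
open scoped Classical

variable {V : Type*} [Fintype V]

/-- `g` is a counter on `G` if `g = fG G` or `g = - fG G`. -/
def IsCounter (G : SimpleGraph V) (g : Finset V → Finset V → ℤ) : Prop :=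
  (g = fun X Y => fG G X Y) ∨ (g = fun X Y => - fG G X Y)

/-- A counter is good if it satisfies the two boundedness conditions. -/
def IsGood (g : Finset V → Finset V → ℤ) : Prop :=
  ∀ X Y : Finset V, Disjoint X Y → (X ∪ Y).Nonempty →
    |g X Y| ≤ 1 ∧
    ∀ u v : V, u ∉ X ∪ Y → v ∉ X ∪ Y →
      |g (insert u X) Y - g (insert v X) Y| ≤ 1
section infra
variable (G : SimpleGraph V)

lemma fG_split_s8 (X Y : Finset V) (w : V) :
    fG G X Y = fG G (insert w X) Y + fG G X (insert w Y) := by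
  classical
  unfold fG
  rw [← Finset.sum_filter_add_sum_filter_not (Finset.univ.filter _) (fun A => w ∈ A)]
  congr 1
  · rw [Finset.filter_filter]
    apply Finset.sum_congr _ (fun _ _ => rfl)
    apply Finset.filter_congr
    intro A _
    simp only [Finset.insert_subset_iff]
    tauto
  · rw [Finset.filter_filter]
    apply Finset.sum_congr _ (fun _ _ => rfl)
    apply Finset.filter_congr
    intro A _
    simp only [Finset.disjoint_insert_right]
    tauto

lemma fG_adj_zero {X Y : Finset V} {a b : V}
    (ha : a ∈ X) (hb : b ∈ X) (hab : G.Adj a b) : fG G X Y = 0 := by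
  classical
  unfold fG
  rw [Finset.filter_eq_empty_iff.2, Finset.sum_empty]
  rintro A -
  rintro ⟨hst, hXA, -⟩
  exact hst a (hXA ha) b (hXA hb) hab

lemma fG_pendant {X Y : Finset V} {v : V}
    (hvX : v ∉ X) (hvY : v ∉ Y) (hstab : ∀ x ∈ X, ¬ G.Adj v x)
    (hN : ∀ w, G.Adj v w → w ∈ X ∪ Y ∨ ∃ x ∈ X, G.Adj x w) :
    fG G (insert v X) Y = - fG G X (insert v Y) := by
  classical
  unfold fG
  rw [← Finset.sum_neg_distrib]
  apply Finset.sum_nbij' (i := fun A => A.erase v) (j := fun B => insert v B)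
  · rintro A hA
    simp only [Finset.mem_filter, Finset.mem_univ, true_and] at hA ⊢
    obtain ⟨hst, hXA, hdA⟩ := hA
    have hvA : v ∈ A := hXA (Finset.mem_insert_self v X)
    refine ⟨fun p hp q hq => hst p (Finset.mem_of_mem_erase hp) q (Finset.mem_of_mem_erase hq), ?_, ?_⟩
    · intro x hx
      exact Finset.mem_erase.2 ⟨fun h => hvX (h ▸ hx), hXA (Finset.mem_insert_of_mem hx)⟩
    · rw [Finset.disjoint_insert_right]
      exact ⟨Finset.notMem_erase v A, Finset.disjoint_of_subset_left (Finset.erase_subset v A) hdA⟩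
  · rintro B hB
    simp only [Finset.mem_filter, Finset.mem_univ, true_and, Finset.disjoint_insert_right] at hB ⊢
    obtain ⟨hst, hXB, hvB, hdB⟩ := hB
    refine ⟨?_, Finset.insert_subset_insert v hXB, ?_⟩
    · intro p hp q hq hpq
      rcases Finset.mem_insert.1 hp with rfl | hp'
      · rcases Finset.mem_insert.1 hq with rfl | hq'
        · exact G.loopless.irrefl _ hpq
        · rcases hN q hpq with hmem | ⟨x, hx, hxq⟩
          · rcases Finset.mem_union.1 hmem with h | h
            · exact hstab q h hpq
            · exact (Finset.disjoint_left.1 hdB hq') h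
          · exact hst x (hXB hx) q hq' hxq
      · rcases Finset.mem_insert.1 hq with rfl | hq'
        · rcases hN p hpq.symm with hmem | ⟨x, hx, hxp⟩
          · rcases Finset.mem_union.1 hmem with h | h
            · exact hstab p h hpq.symm
            · exact (Finset.disjoint_left.1 hdB hp') h
          · exact hst x (hXB hx) p hp' hxp
        · exact hst p hp' q hq' hpq
    · rw [Finset.disjoint_insert_left]
      exact ⟨hvY, hdB⟩
  · rintro A hA
    simp only [Finset.mem_filter, Finset.mem_univ, true_and] at hA
    exact Finset.insert_erase (hA.2.1 (Finset.mem_insert_self v X))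
  · rintro B hB
    simp only [Finset.mem_filter, Finset.mem_univ, true_and, Finset.disjoint_insert_right] at hB
    exact Finset.erase_insert hB.2.2.1
  · rintro A hA
    simp only [Finset.mem_filter, Finset.mem_univ, true_and] at hA
    have hvA : v ∈ A := hA.2.1 (Finset.mem_insert_self v X)
    rw [Finset.card_erase_of_mem hvA]
    obtain ⟨k, hk⟩ : ∃ k, A.card = k + 1 := ⟨A.card - 1, by have := Finset.card_pos.mpr ⟨v, hvA⟩; omega⟩
    rw [hk]
    simp [pow_succ]

variable {g : Finset V → Finset V → ℤ} (hc : IsCounter G g)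

include hc

lemma g_split (X Y : Finset V) (w : V) :
    g X Y = g (insert w X) Y + g X (insert w Y) := by
  rcases hc with rfl | rfl
  · exact fG_split_s8 G X Y w
  · simp only
    rw [fG_split_s8 G X Y w]
    ring

lemma g_adj_zero {X Y : Finset V} {a b : V}
    (ha : a ∈ X) (hb : b ∈ X) (hab : G.Adj a b) : g X Y = 0 := by
  rcases hc with rfl | rfl <;> simp [fG_adj_zero G ha hb hab]

lemma g_stab {X Y : Finset V} (h : g X Y ≠ 0) :
    ∀ a ∈ X, ∀ b ∈ X, ¬ G.Adj a b := by
  intro a ha b hb hab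
  exact h (g_adj_zero G hc ha hb hab)

lemma g_pendant {X Y : Finset V} {v : V}
    (hvX : v ∉ X) (hvY : v ∉ Y) (hstab : ∀ x ∈ X, ¬ G.Adj v x)
    (hN : ∀ w, G.Adj v w → w ∈ X ∪ Y ∨ ∃ x ∈ X, G.Adj x w) :
    g (insert v X) Y = - g X (insert v Y) := by
  rcases hc with rfl | rfl
  · exact fG_pendant G hvX hvY hstab hN
  · simp only
    rw [fG_pendant G hvX hvY hstab hN]

end infra

lemma key (G : SimpleGraph V) (g : Finset V → Finset V → ℤ)
    (hc : IsCounter G g) (hg : IsGood g) :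
    ∀ n : ℕ, ∀ X Y : Finset V, (Finset.univ \ (X ∪ Y)).card ≤ n → Disjoint X Y →
    ∀ u v : V, u ∉ X ∪ Y → v ∉ X ∪ Y →
    g X Y = g (insert u (insert v X)) Y → g X Y = 1 →
    g X Y = g (insert v X) Y := by
  intro n
  induction n with
  | zero =>
    intro X Y hcard _ u v hu _ _ _
    exfalso
    have hmem : u ∈ Finset.univ \ (X ∪ Y) := Finset.mem_sdiff.mpr ⟨Finset.mem_univ u, hu⟩
    have := Finset.card_pos.mpr ⟨u, hmem⟩
    omega
  | succ n IH =>
    intro X Y hcard hXY u v hu hv h1 ha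
    by_cases huv : u = v
    · subst huv
      rwa [Finset.insert_idem] at h1
    have hvu : v ≠ u := fun h => huv h.symm
    have huX : u ∉ X := fun h => hu (Finset.mem_union_left _ h)
    have huY : u ∉ Y := fun h => hu (Finset.mem_union_right _ h)
    have hvX : v ∉ X := fun h => hv (Finset.mem_union_left _ h)
    have hvY : v ∉ Y := fun h => hv (Finset.mem_union_right _ h)
    have hd1 : g (insert u (insert v X)) Y = 1 := by rw [← h1]; exact ha
    have hdne : g (insert u (insert v X)) Y ≠ 0 := by rw [hd1]; exact one_ne_zero
    have hstab := g_stab G hc hdne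
    have hvadjX : ∀ x ∈ X, ¬ G.Adj v x := fun x hx =>
      hstab v (by simp) x (by simp [hx])
    have huvadj : ¬ G.Adj u v := hstab u (by simp) v (by simp)
    have I1 : g X Y = g (insert v X) Y + g X (insert v Y) := g_split G hc X Y v
    by_contra hbne
    by_cases hcase : ∀ w, G.Adj v w → w ∈ X ∪ Y ∨ ∃ x ∈ X, G.Adj x w
    · have hp := g_pendant G hc hvX hvY hvadjX hcase
      omega
    · push_neg at hcase
      obtain ⟨w, hadjvw, hwXY, hwNX⟩ := hcase
      have hwX : w ∉ X := fun h => hwXY (Finset.mem_union_left _ h)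
      have hwY : w ∉ Y := fun h => hwXY (Finset.mem_union_right _ h)
      have hvw : v ≠ w := G.ne_of_adj hadjvw
      have hwv : w ≠ v := hvw.symm
      have hwu : w ≠ u := fun h => huvadj (by rw [h] at hadjvw; exact hadjvw.symm)
      have huw : u ≠ w := hwu.symm
      -- zeros
      have z1 : g (insert v (insert w X)) Y = 0 :=
        g_adj_zero G hc (Finset.mem_insert_self v _) (by simp) hadjvw
      have z2 : g (insert u (insert v (insert w X))) Y = 0 :=
        g_adj_zero G hc (by simp) (by simp) hadjvw
      -- split identities
      have I2 : g (insert v X) Y = g (insert u (insert v X)) Y + g (insert v X) (insert u Y) :=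
        g_split G hc (insert v X) Y u
      have I3 : g (insert u X) Y = g (insert u (insert v X)) Y + g (insert u X) (insert v Y) := by
        have := g_split G hc (insert u X) Y v
        rwa [Finset.insert_comm v u X] at this
      have I4 : g X (insert v Y) = g (insert u X) (insert v Y) + g X (insert u (insert v Y)) :=
        g_split G hc X (insert v Y) u
      have I5 : g (insert w X) Y = g (insert v (insert w X)) Y + g (insert w X) (insert v Y) :=
        g_split G hc (insert w X) Y v
      have I6 : g (insert w X) Y = g (insert u (insert w X)) Y + g (insert w X) (insert u Y) :=
        g_split G hc (insert w X) Y u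
      have I7 : g (insert u (insert w X)) Y
          = g (insert u (insert v (insert w X))) Y + g (insert u (insert w X)) (insert v Y) := by
        have := g_split G hc (insert u (insert w X)) Y v
        rwa [Finset.insert_comm v u (insert w X)] at this
      have I8 : g X Y = g (insert w X) Y + g X (insert w Y) := g_split G hc X Y w
      have I9 : g (insert v X) Y = g (insert v (insert w X)) Y + g (insert v X) (insert w Y) := by
        have := g_split G hc (insert v X) Y w
        rwa [Finset.insert_comm w v X] at this
      have I10 : g (insert u (insert v X)) Y
          = g (insert u (insert v (insert w X))) Y + g (insert u (insert v X)) (insert w Y) := by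
        have := g_split G hc (insert u (insert v X)) Y w
        rwa [Finset.insert_comm w u (insert v X), Finset.insert_comm w v X] at this
      have I11 : g X (insert v Y) = g (insert w X) (insert v Y) + g X (insert v (insert w Y)) := by
        have := g_split G hc X (insert v Y) w
        rwa [Finset.insert_comm w v Y] at this
      -- disjointness facts
      have D1 : Disjoint (insert v X) Y := Finset.disjoint_insert_left.mpr ⟨hvY, hXY⟩
      have D2 : Disjoint (insert u X) Y := Finset.disjoint_insert_left.mpr ⟨huY, hXY⟩
      have D3 : Disjoint X (insert v Y) := Finset.disjoint_insert_right.mpr ⟨hvX, hXY⟩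
      have D4 : Disjoint X (insert u Y) := Finset.disjoint_insert_right.mpr ⟨huX, hXY⟩
      have D5 : Disjoint (insert v X) (insert u Y) :=
        Finset.disjoint_insert_left.mpr ⟨by simp [hvu, hvY], D4⟩
      have D6 : Disjoint X (insert u (insert v Y)) :=
        Finset.disjoint_insert_right.mpr ⟨huX, D3⟩
      have D7 : Disjoint (insert w X) Y := Finset.disjoint_insert_left.mpr ⟨hwY, hXY⟩
      have D8 : Disjoint (insert u (insert w X)) Y :=
        Finset.disjoint_insert_left.mpr ⟨huY, D7⟩
      have D9 : Disjoint X (insert v (insert w Y)) :=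
        Finset.disjoint_insert_right.mpr ⟨hvX, Finset.disjoint_insert_right.mpr ⟨hwX, hXY⟩⟩
      have D10 : Disjoint X (insert w Y) := Finset.disjoint_insert_right.mpr ⟨hwX, hXY⟩
      -- goodness bounds
      have B_b := abs_le.mp (hg (insert v X) Y D1 ⟨v, by simp⟩).1
      have B_c := abs_le.mp (hg (insert u X) Y D2 ⟨u, by simp⟩).1
      have B_q := abs_le.mp (hg (insert v X) (insert u Y) D5 ⟨v, by simp⟩).1
      have B_e := abs_le.mp (hg X (insert u (insert v Y)) D6 ⟨u, by simp⟩).1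
      have B_x0 := abs_le.mp (hg (insert w X) Y D7 ⟨w, by simp⟩).1
      have B_xu := abs_le.mp (hg (insert u (insert w X)) Y D8 ⟨u, by simp⟩).1
      have B_ysv := abs_le.mp (hg X (insert v (insert w Y)) D9 ⟨v, by simp⟩).1
      -- second conditions
      have S1 : |g (insert u (insert v X)) Y - g (insert u (insert w X)) Y| ≤ 1 := by
        have := (hg (insert u X) Y D2 ⟨u, by simp⟩).2 v w
          (by simp [hvu, hvX, hvY]) (by simp [hwu, hwX, hwY])
        rwa [Finset.insert_comm v u X, Finset.insert_comm w u X] at this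
      have S1' := abs_le.mp S1
      have S2 := abs_le.mp ((hg X (insert u Y) D4 ⟨u, by simp⟩).2 v w
        (by simp [hvu, hvX, hvY]) (by simp [hwu, hwX, hwY]))
      -- card helper
      have hfree : ∀ z : V, z ∉ X ∪ Y → (Finset.univ \ (X ∪ insert z Y)).card ≤ n := by
        intro z hz
        have hz' : z ∈ Finset.univ \ (X ∪ Y) :=
          Finset.mem_sdiff.mpr ⟨Finset.mem_univ z, hz⟩
        have hsub : Finset.univ \ (X ∪ insert z Y) ⊆ (Finset.univ \ (X ∪ Y)).erase z := by
          intro t ht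
          simp only [Finset.mem_sdiff, Finset.mem_union, Finset.mem_insert, Finset.mem_erase,
            Finset.mem_univ, true_and] at *
          tauto
        have h2 := Finset.card_le_card hsub
        rw [Finset.card_erase_of_mem hz'] at h2
        have hpos := Finset.card_pos.mpr ⟨z, hz'⟩
        omega
      -- first arithmetic extraction
      have harith : g (insert u X) (insert v Y) = 0 ∧ g X (insert v Y) = 1 ∧
          g (insert v X) Y = 0 ∧ g (insert v X) (insert u Y) = -1 := by omega
      obtain ⟨hp0, hsv1, hb0, hqm1⟩ := harith
      -- IH instance 1 : xp ≠ 1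
      have hxp : g (insert u (insert w X)) (insert v Y) ≠ 1 := by
        intro hxp1
        have hIH := IH X (insert v Y) (hfree v hv) D3 w u
          (by simp [hwX, hwY, hwv]) (by simp [huX, huY, huv])
          (by rw [hsv1, Finset.insert_comm w u X, hxp1]) hsv1
        rw [hsv1, hp0] at hIH
        exact one_ne_zero hIH
      -- xu = 0
      have hxu0 : g (insert u (insert w X)) Y = 0 := by omega
      -- y values
      have hyuv : g (insert u (insert v X)) (insert w Y) = 1 := by omega
      have hyv : g (insert v X) (insert w Y) = 0 := by omega
      -- IH instance 2 : y0 ≠ 1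
      have hy0 : g X (insert w Y) ≠ 1 := by
        intro hy1
        have hIH := IH X (insert w Y) (hfree w hwXY) D10 u v
          (by simp [huX, huY, huw]) (by simp [hvX, hvY, hvw])
          (by rw [hy1, hyuv]) hy1
        rw [hy1, hyv] at hIH
        exact one_ne_zero hIH
      omega

theorem sophieconf (G : SimpleGraph V) (g : Finset V → Finset V → ℤ)
    (hc : IsCounter G g) (hg : IsGood g)
    (X Y : Finset V) (hXY : Disjoint X Y) (u v : V)
    (hu : u ∉ X ∪ Y) (hv : v ∉ X ∪ Y)
    (h1 : g X Y = g (insert u (insert v X)) Y) (h2 : g X Y ≠ 0) :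
    g X Y = g (insert v X) Y := by
  have huY : u ∉ Y := fun h => hu (Finset.mem_union_right _ h)
  have hvY : v ∉ Y := fun h => hv (Finset.mem_union_right _ h)
  have hD : Disjoint (insert u (insert v X)) Y :=
    Finset.disjoint_insert_left.mpr ⟨huY, Finset.disjoint_insert_left.mpr ⟨hvY, hXY⟩⟩
  have habs := abs_le.mp (hg (insert u (insert v X)) Y hD ⟨u, by simp⟩).1
  have hval : g X Y = 1 ∨ g X Y = -1 := by omega
  rcases hval with hval | hval
  · exact key G g hc hg (Finset.univ \ (X ∪ Y)).card X Y le_rfl hXY u v hu hv h1 hval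
  · have hcneg : IsCounter G (fun A B => - g A B) := by
      rcases hc with rfl | rfl
      · right; rfl
      · left; funext A B; simp
    have hgneg : IsGood (fun A B => - g A B) := by
      intro A B hd hne
      obtain ⟨hb1, hb2⟩ := hg A B hd hne
      refine ⟨by simpa using hb1, fun p q hp hq => ?_⟩
      have h2 := hb2 q p hq hp
      simp only
      have heq : -g (insert p A) B - -g (insert q A) B = g (insert q A) B - g (insert p A) B := by
        ring
      rw [heq]
      exact h2
    have := key G (fun A B => - g A B) hcneg hgneg (Finset.univ \ (X ∪ Y)).card X Y le_rfl
      hXY u v hu hv (by simpa using h1) (by simp [hval])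
    simp only [neg_inj] at this
    exact this
end

section
/- Let G be a nonnull graph whose vertex set is partitioned into three stable sets A1, A2, A3, such that for i = 1,2,3 every vertex in A_i has a neighbour in A_{i+1} (indices mod 3). Then G has an induced cycle of length divisible by three. -/
open Fin.NatCast

theorem three_coloured_not_ternary {V : Type*} [Fintype V] (G : SimpleGraph V)
    (hV : Nonempty V) (A : Fin 3 → Set V)
    (hpart : ∀ v : V, ∃! i : Fin 3, v ∈ A i)
    (hstable : ∀ i : Fin 3, ∀ u ∈ A i, ∀ v ∈ A i, ¬ G.Adj u v)
    (hnbr : ∀ i : Fin 3, ∀ u ∈ A i, ∃ v ∈ A (i + 1), G.Adj u v) :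
    ∃ n : ℕ, 3 ≤ n ∧ 3 ∣ n ∧ Nonempty (SimpleGraph.cycleGraph n ↪g G) := by
  classical
  -- the index (colour) function
  choose idx hmem huniq using hpart
  -- the successor function
  choose f hfmem hfadj using fun v => hnbr (idx v) v (hmem v)
  have hidxf : ∀ v, idx (f v) = idx v + 1 := fun v => (huniq (f v) (idx v + 1) (hfmem v)).symm
  -- cast helper
  have hcast : ∀ m : ℕ, ((m : Fin 3)) = ((m % 3 : ℕ) : Fin 3) := fun m => (ZMod.natCast_mod m 3).symm
  -- closed +1-walks
  set P : ℕ → Prop := fun n => 0 < n ∧ ∃ w : ℕ → V,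
      (∀ k < n, G.Adj (w k) (w (k+1)) ∧ idx (w (k+1)) = idx (w k) + 1) ∧ w n = w 0 with hP
  -- existence of a closed walk
  have hex : ∃ n, P n := by
    obtain ⟨v0⟩ := hV
    obtain ⟨a, b, hab, heq⟩ := Finite.exists_ne_map_eq_of_infinite (fun k => f^[k] v0)
    wlog hlt : a < b generalizing a b
    · exact this b a (Ne.symm hab) heq.symm (by omega)
    refine ⟨b - a, by omega, fun k => f^[a + k] v0, fun k _ => ?_, ?_⟩
    · have hsucc : f^[a + (k+1)] v0 = f (f^[a + k] v0) := by
        rw [show a + (k+1) = (a + k) + 1 by ring, Function.iterate_succ_apply']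
      refine ⟨?_, ?_⟩
      · show G.Adj (f^[a+k] v0) (f^[a+(k+1)] v0)
        rw [hsucc]; exact hfadj _
      · show idx (f^[a+(k+1)] v0) = idx (f^[a+k] v0) + 1
        rw [hsucc]; exact hidxf _
    · show f^[a + (b - a)] v0 = f^[a + 0] v0
      rw [show a + (b - a) = b by omega, Nat.add_zero]; exact heq.symm
  -- minimal closed walk
  set n := Nat.find hex with hn
  have hPn : P n := Nat.find_spec hex
  have hmin : ∀ m, m < n → ¬ P m := fun m hm => Nat.find_min hex hm
  obtain ⟨hnpos, w, hstep, hclosed⟩ := hPn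
  -- index along the walk
  have hidxk : ∀ k, k ≤ n → idx (w k) = idx (w 0) + (k : Fin 3) := by
    intro k
    induction k with
    | zero => intro _; simp
    | succ k ih =>
      intro hk
      have h1 := (hstep k (by omega)).2
      rw [h1, ih (by omega), Nat.cast_add, Nat.cast_one, add_assoc]
  -- divisibility
  have hdvd : 3 ∣ n := by
    have h1 : idx (w 0) + (n : Fin 3) = idx (w 0) := by
      rw [← hidxk n le_rfl, hclosed]
    have h2 : (n : Fin 3) = 0 := by
      have h3 : idx (w 0) + (n : Fin 3) = idx (w 0) + 0 := by rw [add_zero]; exact h1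
      exact add_left_cancel h3
    exact (ZMod.natCast_eq_zero_iff n 3).mp h2
  have hn3 : 3 ≤ n := by
    rcases hdvd with ⟨c, hc⟩; omega
  -- wrap-around step
  have hwrap : ∀ j, j < n → G.Adj (w j) (w ((j+1) % n)) ∧ idx (w ((j+1) % n)) = idx (w j) + 1 := by
    intro j hj
    rcases Nat.lt_or_ge (j+1) n with h | h
    · rw [Nat.mod_eq_of_lt h]; exact hstep j hj
    · have hjn : j + 1 = n := by omega
      rw [hjn, Nat.mod_self, ← hclosed, ← hjn]
      exact hstep j hj
  -- vertices are distinct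
  have winj : ∀ a b, a < b → b < n → w a ≠ w b := by
    intro a b hab hbn heq
    refine hmin (b - a) (by omega) ⟨by omega, fun k => w (a + k), fun k hk => ?_, ?_⟩
    · exact hstep (a + k) (by omega)
    · show w (a + (b - a)) = w (a + 0)
      rw [show a + (b - a) = b by omega, Nat.add_zero]; exact heq.symm
  -- no chords
  have hchord : ∀ a b, a < b → b < n → G.Adj (w a) (w b) →
      b = a + 1 ∨ (a = 0 ∧ b = n - 1) := by
    intro a b hab hbn hadj
    by_contra hcon
    push_neg at hcon
    obtain ⟨hne1, hne2⟩ := hcon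
    set d := b - a with hd
    have hidxa : idx (w a) = idx (w 0) + (a : Fin 3) := hidxk a (by omega)
    have hidxb : idx (w b) = idx (w 0) + (b : Fin 3) := hidxk b (by omega)
    rcases (by omega : d % 3 = 0 ∨ d % 3 = 1 ∨ d % 3 = 2) with h0 | h1 | h2
    · -- d ≡ 0 : same colour, contradiction with stability
      have : (b : Fin 3) = (a : Fin 3) := by
        rw [show b = a + d by omega]; push_cast; rw [hcast d, h0]; norm_num
      have heqidx : idx (w b) = idx (w a) := by rw [hidxa, hidxb, this]
      exact hstable (idx (w a)) (w a) (hmem _) (w b) (heqidx ▸ hmem (w b)) hadj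
    · -- d ≡ 1 : shortcut through the chord, going around
      have hd2 : 2 ≤ d := by omega
      have hdb : (b : Fin 3) = (a : Fin 3) + 1 := by
        rw [show b = a + d by omega]; push_cast; rw [hcast d, h1]; norm_num
      refine hmin (n - d + 1) (by omega) ⟨by omega,
        fun k => if k = 0 then w a else w ((b + (k - 1)) % n), fun k hk => ?_, ?_⟩
      · rcases Nat.eq_zero_or_pos k with rfl | hkpos
        · simp only [eq_self_iff_true, if_true, if_neg (Nat.one_ne_zero), Nat.sub_self,
            Nat.add_zero, Nat.mod_eq_of_lt hbn]
          exact ⟨hadj, by rw [hidxa, hidxb, hdb, add_assoc]⟩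
        · have hk0 : k ≠ 0 := by omega
          have hk10 : k + 1 ≠ 0 := by omega
          simp only [if_neg hk0, if_neg hk10]
          have hlt : (b + (k - 1)) % n < n := Nat.mod_lt _ (by omega)
          have harg : (b + (k + 1 - 1)) % n = ((b + (k - 1)) % n + 1) % n := by
            rw [Nat.mod_add_mod, show b + (k + 1 - 1) = b + (k - 1) + 1 by omega]
          rw [harg]
          exact hwrap _ hlt
      · have h1' : n - d + 1 ≠ 0 := by omega
        simp only [if_neg h1', eq_self_iff_true, if_true]
        have : (b + (n - d + 1 - 1)) % n = a % n := by
          rw [show b + (n - d + 1 - 1) = a + n by omega, Nat.add_mod_right]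
        rw [this, Nat.mod_eq_of_lt (by omega)]
    · -- d ≡ 2 : shortcut using the chord directly
      have hend : d + 1 < n := by omega
      have hdb2 : (b : Fin 3) = (a : Fin 3) + 2 := by
        rw [show b = a + d by omega]; push_cast; rw [hcast d, h2]; norm_num
      have hda : (a : Fin 3) = (b : Fin 3) + 1 := by
        rw [hdb2, add_assoc, show (2 : Fin 3) + 1 = 0 by decide, add_zero]
      refine hmin (d + 1) (by omega) ⟨by omega,
        fun k => if k ≤ d then w (a + k) else w a, fun k hk => ?_, ?_⟩
      · rcases Nat.lt_or_ge k d with hkd | hkd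
        · simp only [if_pos (by omega : k ≤ d), if_pos (by omega : k + 1 ≤ d)]
          exact hstep (a + k) (by omega)
        · have hkeq : k = d := by omega
          rw [hkeq]
          simp only [if_pos le_rfl, if_neg (by omega : ¬ d + 1 ≤ d)]
          rw [show a + d = b by omega]
          exact ⟨hadj.symm, by rw [hidxa, hidxb, hda, add_assoc]⟩
      · simp only [if_neg (by omega : ¬ d + 1 ≤ d), if_pos (by omega : 0 ≤ d), Nat.add_zero]
  -- build the embedding
  haveI : NeZero n := ⟨by omega⟩
  refine ⟨n, hn3, hdvd, ⟨⟨⟨fun i => w i.val, ?_⟩, ?_⟩⟩⟩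
  · intro a b heq
    by_contra hne
    rcases Nat.lt_or_ge a.val b.val with h | h
    · exact winj a.val b.val h b.isLt heq
    · have h' : b.val < a.val := by
        rcases Nat.lt_or_ge b.val a.val with h' | h'
        · exact h'
        · exact absurd (Fin.ext (by omega)) hne
      exact winj b.val a.val h' a.isLt heq.symm
  · intro a b
    show G.Adj (w a.val) (w b.val) ↔ (SimpleGraph.cycleGraph n).Adj a b
    rw [SimpleGraph.cycleGraph_adj']
    constructor
    · intro hadj
      have hne : a ≠ b := by rintro rfl; exact G.irrefl hadj
      have key : ∀ x y : Fin n, x.val < y.val → G.Adj (w x.val) (w y.val) →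
          (y - x).val = 1 ∨ (x - y).val = 1 := by
        intro x y hxy hadj'
        rcases hchord x.val y.val hxy y.isLt hadj' with h | ⟨hx0, hy1⟩
        · left
          rw [Fin.sub_def]
          simp only
          rw [show n - x.val + y.val = 1 + n by omega, Nat.add_mod_right,
            Nat.mod_eq_of_lt (by omega)]
        · right
          rw [Fin.sub_def]
          simp only
          rw [hx0, hy1, Nat.add_zero, show n - (n - 1) = 1 by omega,
            Nat.mod_eq_of_lt (by omega)]
      rcases Nat.lt_or_ge a.val b.val with h | h
      · rcases key a b h hadj with h' | h'
        · exact Or.inr h'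
        · exact Or.inl h'
      · have h' : b.val < a.val := by
          rcases Nat.lt_or_ge b.val a.val with h' | h'
          · exact h'
          · exact absurd (Fin.ext (by omega)) hne
        rcases key b a h' hadj.symm with h'' | h''
        · exact Or.inl h''
        · exact Or.inr h''
    · have onestep : ∀ x y : Fin n, (y - x).val = 1 → G.Adj (w x.val) (w y.val) := by
        intro x y hxy
        have hy : y = x + (y - x) := (add_sub_cancel x y).symm
        have hyv : y.val = (x.val + 1) % n := by
          rw [hy, Fin.add_def, hxy]
        rw [hyv]
        exact (hwrap x.val x.isLt).1
      rintro (h | h)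
      · exact (onestep b a h).symm
      · exact onestep a b h
end

section
/- Let V be a finite set and let H be a family of k-element subsets of V such that every (k+1)-element subset of V that includes a member of H includes at least two members of H. Then the relation on V defined by 'u ~ v iff u = v, or (no member of H contains both u and v, and for each C ⊆ V∖{u,v}, C∪{u} ∈ H iff C∪{v} ∈ H)' is an equivalence relation, and for all distinct u, v ∈ V, exactly one of the following holds: u ~ v, or some member of H contains both u and v. -/
private lemma hyper_aux {V : Type*} [Fintype V] [DecidableEq V]
    (k : ℕ) (H : Finset (Finset V))
    (hcard : ∀ B ∈ H, B.card = k)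
    (htwo : ∀ X : Finset V, X.card = k + 1 → (∃ B ∈ H, B ⊆ X) →
      ∃ B₁ ∈ H, ∃ B₂ ∈ H, B₁ ≠ B₂ ∧ B₁ ⊆ X ∧ B₂ ⊆ X)
    {u v : V} (huv : u ≠ v) (hno : ¬ ∃ B ∈ H, u ∈ B ∧ v ∈ B)
    {C : Finset V} (hu : u ∉ C) (hv : v ∉ C) (hB : insert u C ∈ H) :
    insert v C ∈ H := by
  have hvu : v ∉ insert u C := by
    simp [Finset.mem_insert, hv, huv.symm]
  have hcardB : (insert u C).card = k := hcard _ hB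
  set X : Finset V := insert v (insert u C) with hX
  have hXcard : X.card = k + 1 := by
    rw [hX, Finset.card_insert_of_notMem hvu, hcardB]
  obtain ⟨B₁, hB₁, B₂, hB₂, hne, hs₁, hs₂⟩ := htwo X hXcard
    ⟨insert u C, hB, Finset.subset_insert _ _⟩
  -- one of B₁, B₂ is not insert u C
  have key : ∀ B ∈ H, B ⊆ X → B ≠ insert u C → B = insert v C := by
    intro B hBH hBX hBne
    have huB : u ∉ B := by
      intro huB
      have hvB : v ∉ B := fun hvB => hno ⟨B, hBH, huB, hvB⟩
      have : B ⊆ insert u C := by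
        intro x hx
        have := hBX hx
        rw [hX, Finset.mem_insert] at this
        rcases this with h | h
        · exact absurd (h ▸ hx) hvB
        · exact h
      exact hBne (Finset.eq_of_subset_of_card_le this (by rw [hcardB, hcard _ hBH]))
    have hsub : B ⊆ insert v C := by
      have : X.erase u = insert v C := by
        rw [hX, Finset.insert_comm, Finset.erase_insert]
        simp [Finset.mem_insert, hu, huv]
      rw [← this]
      exact Finset.subset_erase.2 ⟨hBX, huB⟩
    refine Finset.eq_of_subset_of_card_le hsub ?_
    rw [Finset.card_insert_of_notMem hv, hcard _ hBH]
    have : C.card + 1 = k := by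
      rw [← Finset.card_insert_of_notMem hu, hcardB]
    omega
  by_cases h1 : B₁ = insert u C
  · have h2 : B₂ ≠ insert u C := fun h => hne (h1.trans h.symm)
    have := key B₂ hB₂ hs₂ h2
    rwa [← this]
  · have := key B₁ hB₁ hs₁ h1
    rwa [← this]

theorem hypergraph_equivalence {V : Type*} [Fintype V] [DecidableEq V]
    (k : ℕ) (hk : 0 < k) (H : Finset (Finset V))
    (hcard : ∀ B ∈ H, B.card = k)
    (htwo : ∀ X : Finset V, X.card = k + 1 → (∃ B ∈ H, B ⊆ X) →
      ∃ B₁ ∈ H, ∃ B₂ ∈ H, B₁ ≠ B₂ ∧ B₁ ⊆ X ∧ B₂ ⊆ X) :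
    Equivalence (fun u v : V => u = v ∨
      ((¬ ∃ B ∈ H, u ∈ B ∧ v ∈ B) ∧
        ∀ C : Finset V, u ∉ C → v ∉ C → (insert u C ∈ H ↔ insert v C ∈ H))) ∧
    ∀ u v : V, u ≠ v →
      Xor' (u = v ∨
        ((¬ ∃ B ∈ H, u ∈ B ∧ v ∈ B) ∧
          ∀ C : Finset V, u ∉ C → v ∉ C → (insert u C ∈ H ↔ insert v C ∈ H)))
        (∃ B ∈ H, u ∈ B ∧ v ∈ B) := by
  constructor
  · constructor
    · intro x; exact Or.inl rfl
    · -- symm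
      rintro x y (rfl | ⟨hno, hiff⟩)
      · exact Or.inl rfl
      · refine Or.inr ⟨?_, fun C hy hx => (hiff C hx hy).symm⟩
        rintro ⟨B, hB, hyB, hxB⟩
        exact hno ⟨B, hB, hxB, hyB⟩
    · -- trans
      rintro x y z (rfl | ⟨hno₁, hiff₁⟩) h₂
      · exact h₂
      rcases h₂ with rfl | ⟨hno₂, hiff₂⟩
      · exact Or.inr ⟨hno₁, hiff₁⟩
      by_cases hxz : x = z
      · exact Or.inl hxz
      refine Or.inr ⟨?_, ?_⟩
      · rintro ⟨B, hB, hxB, hzB⟩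
        by_cases hyB : y ∈ B
        · exact hno₁ ⟨B, hB, hxB, hyB⟩
        -- C = B.erase x; insert x C = B ∈ H, so insert y C ∈ H; but z ∈ C → contradiction hno₂
        set C := B.erase x with hC
        have hxC : x ∉ C := Finset.notMem_erase _ _
        have hyC : y ∉ C := fun h => hyB (Finset.mem_of_mem_erase h)
        have hBC : insert x C = B := Finset.insert_erase hxB
        have h1 : insert y C ∈ H := (hiff₁ C hxC hyC).1 (hBC ▸ hB)
        have hzC : z ∈ C := Finset.mem_erase.2 ⟨fun h => hxz h.symm, hzB⟩
        exact hno₂ ⟨insert y C, h1, Finset.mem_insert_self _ _,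
          Finset.mem_insert_of_mem hzC⟩
      · intro C hxC hzC
        by_cases hyC : y ∈ C
        · constructor
          · intro h
            exact absurd ⟨insert x C, h, Finset.mem_insert_self _ _,
              Finset.mem_insert_of_mem hyC⟩ hno₁
          · intro h
            exact absurd ⟨insert z C, h, Finset.mem_insert_of_mem hyC,
              Finset.mem_insert_self _ _⟩ hno₂
        · exact (hiff₁ C hxC hyC).trans (hiff₂ C hyC hzC)
  · intro u v huv
    by_cases hno : ∃ B ∈ H, u ∈ B ∧ v ∈ B
    · refine Or.inr ⟨hno, ?_⟩
      rintro (rfl | ⟨hno', _⟩)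
      · exact huv rfl
      · exact hno' hno
    · refine Or.inl ⟨Or.inr ⟨hno, fun C hu hv => ?_⟩, hno⟩
      constructor
      · exact hyper_aux k H hcard htwo huv hno hu hv
      · refine hyper_aux k H hcard htwo huv.symm ?_ hv hu
        rintro ⟨B, hB, hvB, huB⟩
        exact hno ⟨B, hB, huB, hvB⟩
end

section
/- If g is a good counter on a graph G and there exist vertices u, v with g({u}) = 1 and g({v}) = −1, then g(∅,∅) = 0 and G is connected. -/
open Finset
open scoped Classical

variable {V : Type*} [Fintype V]

/-- Sum of `(-1)^|A|` over stable sets `A ⊆ S` with `X ⊆ A`. -/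
noncomputable def hS (G : SimpleGraph V) (S X : Finset V) : ℤ :=
  ∑ A ∈ Finset.univ.filter (fun A : Finset V =>
      (∀ u ∈ A, ∀ v ∈ A, ¬ G.Adj u v) ∧ X ⊆ A ∧ A ⊆ S),
    (-1 : ℤ) ^ A.card

lemma fG_factor (G : SimpleGraph V) (S : Finset V)
    (hcross : ∀ a ∈ S, ∀ b, b ∉ S → ¬ G.Adj a b) (X : Finset V) :
    fG G X ∅ = hS G S (X ∩ S) * hS G (univ \ S) (X \ S) := by
  unfold fG hS
  rw [Finset.sum_mul_sum, ← Finset.sum_product']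
  refine Finset.sum_nbij' (fun A => (A ∩ S, A \ S)) (fun P => P.1 ∪ P.2)
    ?_ ?_ ?_ ?_ ?_
  · intro A hA
    simp only [mem_filter, mem_univ, true_and] at hA
    obtain ⟨hst, hX, -⟩ := hA
    rw [Finset.mem_product]
    simp only [mem_filter, mem_univ, true_and]
    refine ⟨⟨fun a ha b hb => hst a (mem_of_mem_inter_left ha) b (mem_of_mem_inter_left hb),
      ?_, inter_subset_right⟩, ⟨fun a ha b hb => hst a (mem_sdiff.1 ha).1 b (mem_sdiff.1 hb).1,
      ?_, by intro a ha; simp [mem_sdiff.1 ha]⟩⟩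
    · exact inter_subset_inter hX (subset_refl S)
    · exact sdiff_subset_sdiff hX (subset_refl S)
  · intro P hP
    rw [Finset.mem_product] at hP
    obtain ⟨⟨h1, hX1, hS1⟩, ⟨h2, hX2, hS2⟩⟩ := by
      simpa only [mem_filter, mem_univ, true_and] using hP
    simp only [mem_filter, mem_univ, true_and]
    refine ⟨?_, ?_, disjoint_empty_right _⟩
    · intro a ha b hb
      rcases mem_union.1 ha with ha' | ha' <;> rcases mem_union.1 hb with hb' | hb'
      · exact h1 a ha' b hb'
      · exact hcross a (hS1 ha') b (fun hb'' => by simpa using mem_sdiff.1 (hS2 hb') |>.2 hb'')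
      · intro hadj
        exact hcross b (hS1 hb') a (fun ha'' => by simpa using mem_sdiff.1 (hS2 ha') |>.2 ha'') hadj.symm
      · exact h2 a ha' b hb'
    · intro x hx
      by_cases hxS : x ∈ S
      · exact mem_union.2 (Or.inl (hX1 (mem_inter.2 ⟨hx, hxS⟩)))
      · exact mem_union.2 (Or.inr (hX2 (mem_sdiff.2 ⟨hx, hxS⟩)))
  · intro A hA
    simp only
    ext a; simp only [mem_union, mem_inter, mem_sdiff]; tauto
  · intro P hP
    rw [Finset.mem_product] at hP
    obtain ⟨⟨-, -, hS1⟩, ⟨-, -, hS2⟩⟩ := by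
      simpa only [mem_filter, mem_univ, true_and] using hP
    have h2 : ∀ a ∈ P.2, a ∉ S := fun a ha => (mem_sdiff.1 (hS2 ha)).2
    ext a
    · simp only [mem_inter, mem_union]
      constructor
      · rintro ⟨h | h, hs⟩
        · exact h
        · exact absurd hs (h2 _ h)
      · intro h; exact ⟨Or.inl h, hS1 h⟩
    · simp only [mem_sdiff, mem_union]
      constructor
      · rintro ⟨h | h, hs⟩
        · exact absurd (hS1 h) hs
        · exact h
      · intro h; exact ⟨Or.inr h, h2 _ h⟩
  · intro A hA
    simp only
    rw [← pow_add, Finset.card_inter_add_card_sdiff]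

lemma fG_del (G : SimpleGraph V) (X : Finset V) (w : V) :
    fG G X ∅ = fG G X {w} + fG G (insert w X) ∅ := by
  unfold fG
  rw [← Finset.sum_filter_add_sum_filter_not
    (Finset.univ.filter (fun A : Finset V =>
      (∀ u ∈ A, ∀ v ∈ A, ¬ G.Adj u v) ∧ X ⊆ A ∧ Disjoint A (∅ : Finset V))) (fun A => w ∉ A)]
  congr 1
  · congr 1
    rw [Finset.filter_filter]
    apply Finset.filter_congr
    intro A _
    simp [Finset.disjoint_singleton_right, and_comm, and_assoc]
    tauto
  · congr 1
    rw [Finset.filter_filter]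
    apply Finset.filter_congr
    intro A _
    simp [Finset.insert_subset_iff, and_comm, and_assoc]
    tauto

lemma key_same (G : SimpleGraph V) (g : Finset V → Finset V → ℤ) (e : ℤ)
    (hge : ∀ X Y, g X Y = e * fG G X Y) (hg : IsGood g)
    (u v w : V) (hu : g {u} ∅ = 1) (hv : g {v} ∅ = -1)
    (S : Finset V) (hcross : ∀ a ∈ S, ∀ b, b ∉ S → ¬ G.Adj a b)
    (huS : u ∈ S) (hvS : v ∈ S) (hwS : w ∉ S) : False := by
  have hune : u ≠ w := fun h => hwS (h ▸ huS)
  have hvne : v ≠ w := fun h => hwS (h ▸ hvS)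
  have sing_int : ∀ z : V, z ∈ S → ({z} : Finset V) ∩ S = {z} := fun z hz =>
    Finset.inter_eq_left.2 (Finset.singleton_subset_iff.2 hz)
  have sing_sd : ∀ z : V, z ∈ S → ({z} : Finset V) \ S = ∅ := fun z hz =>
    Finset.sdiff_eq_empty_iff_subset.2 (Finset.singleton_subset_iff.2 hz)
  have ins_int : ∀ z : V, z ∈ S → (insert w {z} : Finset V) ∩ S = {z} := by
    intro z hz
    ext c
    simp only [Finset.mem_inter, Finset.mem_insert, Finset.mem_singleton]
    constructor
    · rintro ⟨rfl | rfl, hc⟩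
      · exact absurd hc hwS
      · rfl
    · rintro rfl; exact ⟨Or.inr rfl, hz⟩
  have ins_sd : ∀ z : V, z ∈ S → (insert w {z} : Finset V) \ S = {w} := by
    intro z hz
    ext c
    simp only [Finset.mem_sdiff, Finset.mem_insert, Finset.mem_singleton]
    constructor
    · rintro ⟨rfl | rfl, hc⟩
      · rfl
      · exact absurd hz hc
    · rintro rfl; exact ⟨Or.inl rfl, hwS⟩
  have hu' : e * fG G {u} ∅ = 1 := by rw [← hge]; exact hu
  have hv' : e * fG G {v} ∅ = -1 := by rw [← hge]; exact hv
  have h1 : e * (hS G S {u} * hS G (univ \ S) ∅) = 1 := by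
    rw [← hu']
    rw [fG_factor G S hcross {u}, sing_int u huS, sing_sd u huS]
  have h2 : e * (hS G S {v} * hS G (univ \ S) ∅) = -1 := by
    rw [← hv']
    rw [fG_factor G S hcross {v}, sing_int v hvS, sing_sd v hvS]
  have hu2 : g (insert u {w}) ∅ = e * (hS G S {u} * hS G (univ \ S) {w}) := by
    rw [hge, Finset.pair_comm u w, fG_factor G S hcross (insert w {u}),
      ins_int u huS, ins_sd u huS]
  have hv2 : g (insert v {w}) ∅ = e * (hS G S {v} * hS G (univ \ S) {w}) := by
    rw [hge, Finset.pair_comm v w, fG_factor G S hcross (insert w {v}),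
      ins_int v hvS, ins_sd v hvS]
  have gu_w : g {u} {w} = 1 - e * (hS G S {u} * hS G (univ \ S) {w}) := by
    have h := fG_del G {u} w
    rw [fG_factor G S hcross (insert w {u}), ins_int u huS, ins_sd u huS] at h
    rw [hge {u} {w}]
    linear_combination hu' - e * h
  have gv_w : g {v} {w} = -1 - e * (hS G S {v} * hS G (univ \ S) {w}) := by
    have h := fG_del G {v} w
    rw [fG_factor G S hcross (insert w {v}), ins_int v hvS, ins_sd v hvS] at h
    rw [hge {v} {w}]
    linear_combination hv' - e * h
  -- hS G S {v} = - hS G S {u}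
  have hep : e * hS G (univ \ S) ∅ ≠ 0 := by
    intro h
    have h0 : e * (hS G S {u} * hS G (univ \ S) ∅) = 0 := by
      linear_combination (hS G S {u}) * h
    exact zero_ne_one (h0.symm.trans h1)
  have hab : hS G S {v} = - hS G S {u} := by
    have hsum : (e * hS G (univ \ S) ∅) * (hS G S {u} + hS G S {v}) = 0 := by
      linear_combination h1 + h2
    rcases mul_eq_zero.1 hsum with h | h
    · exact absurd h hep
    · linarith
  obtain ⟨t, ht⟩ : ∃ t, e * (hS G S {u} * hS G (univ \ S) {w}) = t := ⟨_, rfl⟩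
  -- goodness at X = ∅, Y = {w}
  obtain ⟨-, hsec1⟩ := hg ∅ {w} (by simp) (by simp)
  have hb1 := hsec1 u v (by simp [hune]) (by simp [hvne])
  rw [show insert u (∅ : Finset V) = {u} by simp,
      show insert v (∅ : Finset V) = {v} by simp] at hb1
  have d1 : g {u} {w} - g {v} {w} = 2 - 2 * t := by
    rw [gu_w, gv_w, hab]
    linear_combination -2 * ht
  rw [d1] at hb1
  -- goodness at X = {w}, Y = ∅
  obtain ⟨-, hsec2⟩ := hg {w} ∅ (by simp) (by simp)
  have hb2 := hsec2 u v (by simp [hune]) (by simp [hvne])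
  have d2 : g (insert u {w}) ∅ - g (insert v {w}) ∅ = 2 * t := by
    rw [hu2, hv2, hab]
    linear_combination 2 * ht
  rw [d2] at hb2
  rcases abs_le.1 hb1 with ⟨l1, r1⟩
  rcases abs_le.1 hb2 with ⟨l2, r2⟩
  omega

lemma key_diff (G : SimpleGraph V) (e : ℤ) (u v : V)
    (S : Finset V) (hcross : ∀ a ∈ S, ∀ b, b ∉ S → ¬ G.Adj a b)
    (huS : u ∈ S) (hvS : v ∉ S)
    (hu : e * fG G {u} ∅ = 1) (hv : e * fG G {v} ∅ = -1)
    (h0 : e * fG G ∅ ∅ = 0) : False := by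
  have h1 : e * (hS G S ({u} ∩ S) * hS G (univ \ S) ({u} \ S)) = 1 := by
    rw [← fG_factor G S hcross {u}]; exact hu
  have h2 : e * (hS G S ({v} ∩ S) * hS G (univ \ S) ({v} \ S)) = -1 := by
    rw [← fG_factor G S hcross {v}]; exact hv
  have h3 : e * (hS G S ((∅ : Finset V) ∩ S) * hS G (univ \ S) ((∅ : Finset V) \ S)) = 0 := by
    rw [← fG_factor G S hcross ∅]; exact h0
  rw [Finset.inter_eq_left.2 (Finset.singleton_subset_iff.2 huS),
      Finset.sdiff_eq_empty_iff_subset.2 (Finset.singleton_subset_iff.2 huS)] at h1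
  have hint : ({v} : Finset V) ∩ S = ∅ := by
    ext c; simp only [Finset.mem_inter, Finset.mem_singleton, Finset.notMem_empty, iff_false]
    rintro ⟨rfl, h⟩; exact hvS h
  have hsd : ({v} : Finset V) \ S = {v} := by
    ext c; simp only [Finset.mem_sdiff, Finset.mem_singleton]
    constructor
    · rintro ⟨h, -⟩; exact h
    · rintro rfl; exact ⟨rfl, hvS⟩
  rw [hint, hsd] at h2
  rw [Finset.empty_inter, Finset.empty_sdiff] at h3
  have hp : hS G (univ \ S) ∅ ≠ 0 := by
    intro h; rw [h] at h1; simp at h1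
  have hq : hS G S ∅ ≠ 0 := by
    intro h; rw [h] at h2; simp at h2
  have he : e ≠ 0 := by
    intro h; rw [h] at h1; simp at h1
  exact (mul_ne_zero he (mul_ne_zero hq hp)) h3

theorem mixed_values_connected (G : SimpleGraph V) (g : Finset V → Finset V → ℤ)
    (hc : IsCounter G g) (hg : IsGood g)
    (u v : V) (hu : g {u} ∅ = 1) (hv : g {v} ∅ = -1) :
    g ∅ ∅ = 0 ∧ G.Connected := by
  obtain ⟨e, hge⟩ : ∃ e : ℤ, ∀ X Y, g X Y = e * fG G X Y := by
    rcases hc with h | h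
    · exact ⟨1, fun X Y => by simp [h]⟩
    · exact ⟨-1, fun X Y => by simp [h]⟩
  -- part 1: g ∅ ∅ = 0
  have key1 : ∀ x : V, g ∅ ∅ = g ∅ {x} + g {x} ∅ := by
    intro x
    have h := fG_del G ∅ x
    rw [show insert x (∅ : Finset V) = {x} by simp] at h
    rw [hge ∅ ∅, hge ∅ {x}, hge {x} ∅]
    linear_combination e * h
  have b1 : |g ∅ {u}| ≤ 1 := (hg ∅ {u} (by simp) (by simp)).1
  have b2 : |g ∅ {v}| ≤ 1 := (hg ∅ {v} (by simp) (by simp)).1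
  have e1 := key1 u
  have e2 := key1 v
  rw [hu] at e1
  rw [hv] at e2
  rcases abs_le.1 b1 with ⟨l1, r1⟩
  rcases abs_le.1 b2 with ⟨l2, r2⟩
  have h00 : g ∅ ∅ = 0 := by omega
  refine ⟨h00, ?_⟩
  -- part 2: connectivity
  rw [SimpleGraph.connected_iff]
  refine ⟨?_, ⟨u⟩⟩
  intro x y
  by_contra hxy
  set S := univ.filter (fun z => G.Reachable x z) with hSdef
  have hxS : x ∈ S := by
    simp only [hSdef, mem_filter, mem_univ, true_and]
    exact SimpleGraph.Reachable.refl x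
  have hyS : y ∉ S := by simpa [hSdef] using hxy
  have hcross : ∀ a ∈ S, ∀ b, b ∉ S → ¬ G.Adj a b := by
    intro a ha b hb hadj
    simp only [hSdef, mem_filter, mem_univ, true_and] at ha hb
    exact hb (ha.trans hadj.reachable)
  have hcross' : ∀ a ∈ univ \ S, ∀ b, b ∉ univ \ S → ¬ G.Adj a b := by
    intro a ha b hb hadj
    have ha' : a ∉ S := (mem_sdiff.1 ha).2
    have hb' : b ∈ S := by simpa using hb
    exact hcross b hb' a ha' hadj.symm
  have hu' : e * fG G {u} ∅ = 1 := by rw [← hge]; exact hu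
  have hv' : e * fG G {v} ∅ = -1 := by rw [← hge]; exact hv
  have h0' : e * fG G ∅ ∅ = 0 := by rw [← hge]; exact h00
  by_cases huS : u ∈ S <;> by_cases hvS : v ∈ S
  · exact key_same G g e hge hg u v y hu hv S hcross huS hvS hyS
  · exact key_diff G e u v S hcross huS hvS hu' hv' h0'
  · refine key_diff G e u v (univ \ S) hcross' ?_ ?_ hu' hv' h0'
    · exact mem_sdiff.2 ⟨mem_univ u, huS⟩
    · simp [hvS]
  · refine key_same G g e hge hg u v x hu hv (univ \ S) hcross' ?_ ?_ ?_
    · exact mem_sdiff.2 ⟨mem_univ u, huS⟩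
    · exact mem_sdiff.2 ⟨mem_univ v, hvS⟩
    · simp [hxS]
end

section
/- If g is a good counter on a graph G with g(∅,∅) ≥ 2, then g(∅,∅) = 2, g({v}) = 1 for every vertex v, and G is connected. -/
open Finset
open scoped Classical

variable {V : Type*} [Fintype V]

/-- The basic deletion-contraction style recursion for `fG`. -/
lemma fG_rec (G : SimpleGraph V) (X Y : Finset V) (v : V) :
    fG G X Y = fG G (insert v X) Y + fG G X (insert v Y) := by
  classical
  have h : (Finset.univ.filter (fun A : Finset V =>
      (∀ u ∈ A, ∀ w ∈ A, ¬ G.Adj u w) ∧ X ⊆ A ∧ Disjoint A Y))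
      = (Finset.univ.filter (fun A : Finset V =>
          (∀ u ∈ A, ∀ w ∈ A, ¬ G.Adj u w) ∧ insert v X ⊆ A ∧ Disjoint A Y))
        ∪ (Finset.univ.filter (fun A : Finset V =>
          (∀ u ∈ A, ∀ w ∈ A, ¬ G.Adj u w) ∧ X ⊆ A ∧ Disjoint A (insert v Y))) := by
    ext A
    simp only [Finset.mem_filter, Finset.mem_union, Finset.mem_univ, true_and,
      Finset.insert_subset_iff, Finset.disjoint_insert_right]
    tauto
  have hd : Disjoint (Finset.univ.filter (fun A : Finset V =>
          (∀ u ∈ A, ∀ w ∈ A, ¬ G.Adj u w) ∧ insert v X ⊆ A ∧ Disjoint A Y))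
        (Finset.univ.filter (fun A : Finset V =>
          (∀ u ∈ A, ∀ w ∈ A, ¬ G.Adj u w) ∧ X ⊆ A ∧ Disjoint A (insert v Y))) := by
    rw [Finset.disjoint_left]
    intro A h1 h2
    simp only [Finset.mem_filter, Finset.mem_univ, true_and,
      Finset.insert_subset_iff, Finset.disjoint_insert_right] at h1 h2
    exact h2.2.2.1 h1.2.1.1
  rw [fG, fG, fG, h, Finset.sum_union hd]

/-- Sum of `(-1)^|A|` over stable sets with `X ⊆ A ⊆ S`. -/
noncomputable def Pfun (G : SimpleGraph V) (S X : Finset V) : ℤ :=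
  ∑ A ∈ Finset.univ.filter (fun A : Finset V =>
      (∀ u ∈ A, ∀ v ∈ A, ¬ G.Adj u v) ∧ X ⊆ A ∧ A ⊆ S),
    (-1 : ℤ) ^ A.card

/-- Multiplicativity of `fG` over a split with no cross edges. -/
lemma fG_mul (G : SimpleGraph V) (S X : Finset V)
    (hS : ∀ a ∈ S, ∀ b, b ∉ S → ¬ G.Adj a b) (hX : X ⊆ S) :
    fG G X ∅ = Pfun G S X * Pfun G Sᶜ ∅ := by
  classical
  rw [Pfun, Pfun, Finset.sum_mul_sum, ← Finset.sum_product']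
  rw [fG]
  refine Finset.sum_nbij' (fun A : Finset V => (A ∩ S, A \ S))
    (fun p : Finset V × Finset V => p.1 ∪ p.2) ?_ ?_ ?_ ?_ ?_
  · -- maps into product
    intro A hA
    simp only [Finset.mem_filter, Finset.mem_univ, true_and] at hA
    obtain ⟨hst, hXA, -⟩ := hA
    simp only [Finset.mem_product, Finset.mem_filter, Finset.mem_univ, true_and]
    refine ⟨⟨fun u hu v hv => hst u (Finset.mem_of_mem_inter_left hu)
        v (Finset.mem_of_mem_inter_left hv), ?_, Finset.inter_subset_right⟩,
      fun u hu v hv => hst u (Finset.mem_sdiff.mp hu).1 v (Finset.mem_sdiff.mp hv).1,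
      Finset.empty_subset _, ?_⟩
    · exact Finset.subset_inter hXA hX
    · intro x hx
      simp only [Finset.mem_sdiff] at hx
      simpa using hx.2
  · -- maps back
    intro p hp
    simp only [Finset.mem_product, Finset.mem_filter, Finset.mem_univ, true_and] at hp
    obtain ⟨⟨hst1, hX1, hS1⟩, hst2, -, hS2⟩ := hp
    simp only [Finset.mem_filter, Finset.mem_univ, true_and]
    refine ⟨?_, hX1.trans Finset.subset_union_left, Finset.disjoint_empty_right _⟩
    intro u hu v hv
    rcases Finset.mem_union.mp hu with h1 | h1 <;> rcases Finset.mem_union.mp hv with h2 | h2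
    · exact hst1 u h1 v h2
    · exact hS u (hS1 h1) v (by simpa using hS2 h2)
    · intro hadj
      exact hS v (hS1 h2) u (by simpa using hS2 h1) hadj.symm
    · exact hst2 u h1 v h2
  · -- left inverse : (A ∩ S) ∪ (A \ S) = A
    intro A _
    ext x
    simp only [Finset.mem_union, Finset.mem_inter, Finset.mem_sdiff]
    tauto
  · -- right inverse
    intro p hp
    simp only [Finset.mem_product, Finset.mem_filter, Finset.mem_univ, true_and] at hp
    obtain ⟨⟨-, -, hS1⟩, -, -, hS2⟩ := hp
    have h1 : (p.1 ∪ p.2) ∩ S = p.1 := by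
      ext x
      simp only [Finset.mem_inter, Finset.mem_union]
      constructor
      · rintro ⟨h | h, hxS⟩
        · exact h
        · exact absurd hxS (by simpa using hS2 h)
      · exact fun h => ⟨Or.inl h, hS1 h⟩
    have h2 : (p.1 ∪ p.2) \ S = p.2 := by
      ext x
      simp only [Finset.mem_sdiff, Finset.mem_union]
      constructor
      · rintro ⟨h | h, hxS⟩
        · exact absurd (hS1 h) hxS
        · exact h
      · exact fun h => ⟨Or.inr h, by simpa using hS2 h⟩
    exact Prod.ext h1 h2
  · -- values agree
    intro A hA
    have hdisj : Disjoint (A ∩ S) (A \ S) := by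
      rw [Finset.disjoint_left]
      intro x hx hx'
      exact (Finset.mem_sdiff.mp hx').2 (Finset.mem_inter.mp hx).2
    have hcard : (A ∩ S).card + (A \ S).card = A.card := by
      rw [← Finset.card_union_of_disjoint hdisj]
      congr 1
      ext x; simp only [Finset.mem_union, Finset.mem_inter, Finset.mem_sdiff]; tauto
    rw [← hcard, pow_add]

set_option maxHeartbeats 1000000 in
theorem step1 (G : SimpleGraph V) (g : Finset V → Finset V → ℤ)
    (hc : IsCounter G g) (hg : IsGood g) (h2 : 2 ≤ g ∅ ∅) :
    g ∅ ∅ = 2 ∧ (∀ v : V, g {v} ∅ = 1) ∧ G.Connected := by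
  -- normalize the counter as ε * fG
  obtain ⟨ε, hε1, hε⟩ : ∃ ε : ℤ, (ε = 1 ∨ ε = -1) ∧ ∀ X Y, g X Y = ε * fG G X Y := by
    rcases hc with h | h
    · exact ⟨1, Or.inl rfl, fun X Y => by rw [h]; ring⟩
    · exact ⟨-1, Or.inr rfl, fun X Y => by rw [h]; ring⟩
  -- V is nonempty
  have hV : Nonempty V := by
    by_contra h
    rw [not_nonempty_iff] at h
    have hfilter : (Finset.univ.filter (fun A : Finset V =>
        (∀ u ∈ A, ∀ v ∈ A, ¬ G.Adj u v) ∧ (∅ : Finset V) ⊆ A ∧ Disjoint A ∅)) = {∅} := by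
      apply Finset.eq_singleton_iff_unique_mem.mpr
      refine ⟨?_, fun A _ => Finset.eq_empty_of_forall_notMem fun x _ => h.false x⟩
      simp only [Finset.mem_filter, Finset.mem_univ, true_and]
      exact ⟨fun u hu => absurd hu (Finset.notMem_empty u), Finset.Subset.refl _,
        Finset.disjoint_empty_right _⟩
    have hf0 : fG G ∅ ∅ = 1 := by
      rw [fG]
      exact (Finset.sum_congr hfilter fun _ _ => rfl).trans (by simp)
    have := hε ∅ ∅
    rw [hf0] at this
    rcases hε1 with h1 | h1 <;> omega
  -- key recursion consequence
  have key : ∀ v : V, g ∅ ∅ = g {v} ∅ + g ∅ {v} := by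
    intro v
    rw [hε, hε, hε, fG_rec G ∅ ∅ v]
    have h1 : insert v (∅ : Finset V) = {v} := rfl
    rw [h1]
    ring
  have hbnd : ∀ v : V, g {v} ∅ = 1 ∧ g ∅ {v} = 1 ∧ g ∅ ∅ = 2 := by
    intro v
    have h1 := (hg {v} ∅ (Finset.disjoint_empty_right _) (by simp)).1
    have h2' := (hg ∅ {v} (Finset.disjoint_empty_left _) (by simp)).1
    rw [abs_le] at h1 h2'
    have := key v
    omega
  obtain ⟨v0⟩ := hV
  refine ⟨(hbnd v0).2.2, fun v => (hbnd v).1, ?_⟩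
  rw [SimpleGraph.connected_iff]
  refine ⟨?_, ⟨v0⟩⟩
  intro u v
  by_contra hruv
  set S : Finset V := Finset.univ.filter (fun w => G.Reachable u w) with hSdef
  have hu : u ∈ S := by
    simp only [hSdef, Finset.mem_filter, Finset.mem_univ, true_and]
    exact SimpleGraph.Reachable.refl u
  have hv : v ∉ S := by simp [hSdef, hruv]
  have hS : ∀ a ∈ S, ∀ b, b ∉ S → ¬ G.Adj a b := by
    intro a ha b hb hadj
    apply hb
    simp only [hSdef, Finset.mem_filter, Finset.mem_univ, true_and] at ha ⊢
    exact ha.trans hadj.reachable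
  have hSc : ∀ a ∈ Sᶜ, ∀ b, b ∉ Sᶜ → ¬ G.Adj a b := by
    intro a ha b hb hadj
    rw [Finset.mem_compl] at ha
    rw [Finset.notMem_compl] at hb
    exact hS b hb a ha hadj.symm
  -- apply multiplicativity
  have e1 : g {u} ∅ = ε * (Pfun G S {u} * Pfun G Sᶜ ∅) := by
    rw [hε, fG_mul G S {u} hS (Finset.singleton_subset_iff.mpr hu)]
  have e2 : g {v} ∅ = ε * (Pfun G Sᶜ {v} * Pfun G S ∅) := by
    rw [hε, fG_mul G Sᶜ {v} hSc (Finset.singleton_subset_iff.mpr (Finset.mem_compl.mpr hv))]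
    rw [compl_compl]
  have e0 : g ∅ ∅ = ε * (Pfun G S ∅ * Pfun G Sᶜ ∅) := by
    rw [hε, fG_mul G S ∅ hS (Finset.empty_subset _)]
  have hgu : g {u} ∅ = 1 := (hbnd u).1
  have hgv : g {v} ∅ = 1 := (hbnd v).1
  have hg00 : g ∅ ∅ = 2 := (hbnd v0).2.2
  have hb : IsUnit (Pfun G Sᶜ ∅) :=
    IsUnit.of_mul_eq_one (ε * Pfun G S {u}) (by rw [e1] at hgu; linear_combination hgu)
  have ha : IsUnit (Pfun G S ∅) :=
    IsUnit.of_mul_eq_one (ε * Pfun G Sᶜ {v}) (by rw [e2] at hgv; linear_combination hgv)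
  rw [Int.isUnit_iff] at ha hb
  rw [e0] at hg00
  rcases hε1 with h | h <;> rcases ha with h' | h' <;> rcases hb with h'' | h'' <;>
    rw [h, h', h''] at hg00 <;> norm_num at hg00
end
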